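/- Let m ∈ {1,…,n} and let W be any colored word on the set {1,…,n}∖{m}. Then for every h ∈ {0,…,r−1} and every q ∈ ℂ, ∑_{π ∈ G_{r,n}(W)} χ_{1,h}(π) q^{fmaj(π)} = χ_{1,h}(W) · q^{fmaj(W)} · [n·r]_{ζ^h q}. -/

import Mathlib

open Finset

open scoped Classical

/-- `Flt x y` means `x <_F y` in the order on colored integers:
`(a,s) <_F (b,t)` iff `s > t`, or `s = t` and `a < b`. -/
def Flt (x y : ℕ × ℕ) : Prop := y.2 < x.2 ∨ (x.2 = y.2 ∧ x.1 < y.1)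

instance (x y : ℕ × ℕ) : Decidable (Flt x y) := by unfold Flt; infer_instance

/-- Inversion number of a list of naturals. -/
def invNum (l : List ℕ) : ℕ :=
  ∑ i ∈ Finset.range l.length, ∑ j ∈ Finset.range l.length,
    if i < j ∧ l.getD j 0 < l.getD i 0 then 1 else 0

/-- Sum of the colors of a colored word. -/
def colSum (l : List (ℕ × ℕ)) : ℕ := (l.map Prod.snd).sum

/-- The major index `maj_F` of a colored word: the sum of the
(1-indexed) positions `i` with `l_i >_F l_{i+1}`. -/
def majF (l : List (ℕ × ℕ)) : ℕ :=
  ∑ i ∈ Finset.range (l.length - 1),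
    if Flt (l.getD (i + 1) (0, 0)) (l.getD i (0, 0)) then i + 1 else 0

/-- The flag major index `fmaj = r·maj_F + col`. -/
def fmaj (r : ℕ) (l : List (ℕ × ℕ)) : ℕ := r * majF l + colSum l

/-- The list of absolute values of a colored word. -/
def absList (l : List (ℕ × ℕ)) : List ℕ := l.map Prod.fst

/-- The one-dimensional character value `χ_{ε,h}` of a colored word:
`ε^{inv(|W|)} · ζ^{h·col(W)}`. -/
noncomputable def chi (ε ζ : ℂ) (h : ℕ) (l : List (ℕ × ℕ)) : ℂ :=
  ε ^ invNum (absList l) * ζ ^ (h * colSum l)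

/-- `[m]_x = 1 + x + ⋯ + x^{m-1}`. -/
noncomputable def qnum (m : ℕ) (x : ℂ) : ℂ := ∑ i ∈ Finset.range m, x ^ i

/-- Colored permutations in `G_{r,n}`: a permutation of `Fin n` together with
a color in `Fin r` at each position. -/
abbrev GP (r n : ℕ) := Equiv.Perm (Fin n) × (Fin n → Fin r)

/-- The window notation of a colored permutation: the colored word whose `i`-th
entry is the value `π.1 i` (shifted to lie in `{1,…,n}`) with color `π.2 i`. -/
def window {r n : ℕ} (π : GP r n) : List (ℕ × ℕ) :=
  (List.finRange n).map fun i => ((π.1 i : ℕ) + 1, (π.2 i : ℕ))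

/-- `W` is a colored word on the finite set `A`: its absolute values are exactly
the elements of `A`, each used once, and all colors are in `{0,…,r-1}`. -/
def IsColoredWordOn (r : ℕ) (A : Finset ℕ) (W : List (ℕ × ℕ)) : Prop :=
  (W.map Prod.fst).Nodup ∧ (W.map Prod.fst).toFinset = A ∧ ∀ p ∈ W, p.2 < r

/- ### Auxiliary lemmas -/

lemma Flt_trans' {x y z : ℕ×ℕ} (h1 : Flt x y) (h2 : Flt y z) : Flt x z := by
  unfold Flt at *; omega

lemma Flt_or' {x y : ℕ×ℕ} (h : x.1 ≠ y.1) : Flt x y ∨ Flt y x := by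
  unfold Flt; omega

lemma Flt_asymm' {x y : ℕ×ℕ} (h : Flt x y) : ¬ Flt y x := by
  unfold Flt at *; omega

lemma getD_insertIdx' {α : Type*} : ∀ (l : List α) (j : ℕ), j ≤ l.length → ∀ (a d : α) (i : ℕ),
    (l.insertIdx j a).getD i d =
      if i < j then l.getD i d else if i = j then a else l.getD (i-1) d
  | l, 0, _, a, d, i => by
      rw [List.insertIdx_zero]
      rcases i with _ | i <;> simp
  | [], j+1, h, _, _, _ => by simp at h
  | x :: l, j+1, h, a, d, i => by
      rw [List.insertIdx_succ_cons]
      rcases i with _ | i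
      · simp
      · rw [List.getD_cons_succ, List.getD_cons_succ,
          getD_insertIdx' l j (by simpa using h) a d i]
        rcases lt_trichotomy i j with hc | hc | hc
        · simp [hc, Nat.succ_lt_succ hc]
        · simp [hc]
        · have h1 : ¬ (i < j) := by omega
          have h2 : ¬ (i + 1 < j + 1) := by omega
          have h3 : i ≠ j := by omega
          have h4 : i + 1 ≠ j + 1 := by omega
          simp only [h1, h2, h3, h4, if_false, if_neg, Nat.add_sub_cancel]
          rcases i with _ | i
          · omega
          · rw [Nat.add_sub_cancel, List.getD_cons_succ]

lemma insertIdx_append' {α : Type*} : ∀ (l : List α) (j : ℕ), j ≤ l.length →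
    ∀ (a : α) (s : List α), (l ++ s).insertIdx j a = l.insertIdx j a ++ s
  | l, 0, _, a, s => by simp [List.insertIdx_zero]
  | [], j+1, h, a, s => by simp at h
  | x :: l, j+1, h, a, s => by
      simp only [List.cons_append, List.insertIdx_succ_cons,
        insertIdx_append' l j (by simpa using h) a s]

lemma sublist_insertIdx' {α : Type*} : ∀ (l : List α) (j : ℕ) (a : α),
    l.Sublist (l.insertIdx j a)
  | l, 0, a => List.sublist_cons_self a l
  | [], j+1, a => by simp [List.insertIdx_succ_nil]
  | x :: l, j+1, a => by
      rw [List.insertIdx_succ_cons]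
      exact (sublist_insertIdx' l j a).cons₂ x

lemma exists_insertIdx_of_sublist' {α : Type*} {l L : List α} (h : l.Sublist L)
    (hlen : L.length = l.length + 1) : ∃ j ≤ l.length, ∃ a, L = l.insertIdx j a := by
  induction h with
  | slnil => simp at hlen
  | @cons l₁ l₂ a h ih =>
      have hl : l₁.length = l₂.length := by simpa using hlen.symm
      have := h.eq_of_length hl
      exact ⟨0, Nat.zero_le _, a, by rw [List.insertIdx_zero, this]⟩
  | cons_cons a h ih =>
      obtain ⟨j, hj, b, rfl⟩ := ih (by simpa using hlen)
      exact ⟨j+1, by simpa using hj, b, by rw [List.insertIdx_succ_cons]⟩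

lemma map_insertIdx' {α β : Type*} (f : α → β) : ∀ (l : List α) (j : ℕ) (a : α),
    (l.insertIdx j a).map f = (l.map f).insertIdx j (f a)
  | l, 0, a => by simp [List.insertIdx_zero]
  | [], j+1, a => by simp [List.insertIdx_succ_nil]
  | x :: l, j+1, a => by
      simp only [List.insertIdx_succ_cons, List.map_cons, map_insertIdx' f l j a]

lemma majF_append' (l : List (ℕ×ℕ)) (a : ℕ×ℕ) :
    majF (l ++ [a]) = majF l +
      if Flt a (l.getD (l.length - 1) (0,0)) then l.length else 0 := by
  rcases Nat.eq_zero_or_eq_succ_pred l.length with h0 | hlen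
  · have : l = [] := List.length_eq_zero_iff.mp h0
    subst this; simp [majF]
  · set k := l.length - 1 with hk
    unfold majF
    have hl1 : (l ++ [a]).length - 1 = k + 1 := by
      rw [List.length_append, List.length_singleton]; omega
    rw [hl1, ← hk, Finset.sum_range_succ]
    congr 1
    · apply Finset.sum_congr rfl
      intro i hi
      have hi' : i < k := Finset.mem_range.mp hi
      rw [List.getD_append _ _ _ _ (by omega), List.getD_append _ _ _ _ (by omega)]
    · have h1 : (l ++ [a]).getD (k+1) (0,0) = a := by
        rw [List.getD_append_right _ _ _ _ (by omega)]
        have : k + 1 - l.length = 0 := by omega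
        rw [this]; rfl
      have h2 : (l ++ [a]).getD k (0,0) = l.getD k (0,0) := by
        rw [List.getD_append _ _ _ _ (by omega)]
      rw [h1, h2]
      have : k + 1 = l.length := by omega
      rw [this]

/-- The key insertion lemma for the flag major index. -/
lemma lemA (x : ℂ) (a : ℕ×ℕ) : ∀ (W : List (ℕ×ℕ)), a.1 ∉ W.map Prod.fst →
    ∑ j ∈ Finset.range (W.length + 1), x ^ majF (W.insertIdx j a)
      = (∑ i ∈ Finset.range (W.length + 1), x ^ i) * x ^ majF W := by
  intro W
  induction W using List.reverseRecOn with
  | nil => intro _; simp [majF]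
  | append_singleton W' w ih =>
    intro ha
    have haW' : a.1 ∉ W'.map Prod.fst := fun hmem => ha (by simp [hmem])
    have haw : a.1 ≠ w.1 := fun e => ha (by simp [e])
    set ℓ := W'.length with hℓ
    set lastW' := W'.getD (ℓ - 1) (0,0) with hlast
    have hlen : (W' ++ [w]).length = ℓ + 1 := by simp [hℓ]
    rw [hlen]
    have hM : majF (W' ++ [w]) = majF W' + (if Flt w lastW' then ℓ else 0) :=
      majF_append' W' w
    rw [Finset.sum_range_succ, Finset.sum_range_succ]
    have hgetw : (W' ++ [w]).getD ℓ (0,0) = w := by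
      rw [List.getD_append_right _ _ _ _ (le_refl _)]
      simp
    have hCval : majF ((W' ++ [w]).insertIdx (ℓ+1) a)
        = majF (W' ++ [w]) + (if Flt a w then ℓ + 1 else 0) := by
      have hC : (W' ++ [w]).insertIdx (ℓ+1) a = (W' ++ [w]) ++ [a] := by
        conv_lhs => rw [show ℓ + 1 = (W' ++ [w]).length from hlen.symm]
        exact List.insertIdx_length_self
      rw [hC, majF_append', hlen]
      simp only [Nat.add_sub_cancel, hgetw]
    have hgeta : (W' ++ [a]).getD ℓ (0,0) = a := by
      rw [List.getD_append_right _ _ _ _ (le_refl _)]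
      simp
    have hBval : majF ((W' ++ [w]).insertIdx ℓ a)
        = majF (W' ++ [a]) + (if Flt w a then ℓ + 1 else 0) := by
      have hB : (W' ++ [w]).insertIdx ℓ a = (W' ++ [a]) ++ [w] := by
        rw [insertIdx_append' W' ℓ (le_refl _) a [w], List.insertIdx_length_self]
      rw [hB, majF_append']
      have : (W' ++ [a]).length = ℓ + 1 := by simp [hℓ]
      rw [this]
      simp only [Nat.add_sub_cancel, hgeta]
    have hT : majF (W' ++ [a]) = majF W' + (if Flt a lastW' then ℓ else 0) :=
      majF_append' W' a
    have hterm : ∀ j ∈ Finset.range ℓ, x ^ majF ((W' ++ [w]).insertIdx j a)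
        = x ^ majF (W'.insertIdx j a) * x ^ (if Flt w lastW' then ℓ + 1 else 0) := by
      intro j hj
      have hj' : j < ℓ := Finset.mem_range.mp hj
      have h1 : (W' ++ [w]).insertIdx j a = W'.insertIdx j a ++ [w] :=
        insertIdx_append' W' j (le_of_lt hj') a [w]
      have hlen2 : (W'.insertIdx j a).length = ℓ + 1 :=
        List.length_insertIdx_of_le_length (by omega) a
      have hget : (W'.insertIdx j a).getD ℓ (0,0) = lastW' := by
        rw [getD_insertIdx' W' j (by omega) a (0,0) ℓ]
        have h2 : ¬ (ℓ < j) := by omega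
        have h3 : ℓ ≠ j := by omega
        rw [if_neg h2, if_neg h3]
      rw [h1, majF_append', hlen2]
      simp only [Nat.add_sub_cancel, hget]
      rw [pow_add]
    rw [Finset.sum_congr rfl hterm, ← Finset.sum_mul]
    have ihs := ih haW'
    have hpeel : ∑ j ∈ Finset.range ℓ, x ^ majF (W'.insertIdx j a)
        = (∑ i ∈ Finset.range (ℓ + 1), x ^ i) * x ^ majF W' - x ^ majF (W' ++ [a]) := by
      have h4 := Finset.sum_range_succ (fun j => x ^ majF (W'.insertIdx j a)) ℓ
      rw [ihs] at h4
      have h5 : W'.insertIdx ℓ a = W' ++ [a] := List.insertIdx_length_self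
      rw [h5] at h4
      linear_combination -h4
    rw [hpeel, hCval, hBval, hT, hM]
    by_cases hd : Flt w lastW' <;> by_cases hα : Flt w a
    · have hβ : ¬ Flt a w := Flt_asymm' hα
      simp only [if_pos hd, if_pos hα, if_neg hβ]
      have hS : (∑ i ∈ Finset.range (ℓ + 1 + 1), x ^ i)
          = x * (∑ i ∈ Finset.range (ℓ + 1), x ^ i) + 1 := geom_sum_succ
      rw [hS]
      ring
    · have hβ : Flt a w := (Flt_or' haw).resolve_right hα
      have haℓ : Flt a lastW' := Flt_trans' hβ hd
      simp only [if_pos hd, if_pos hβ, if_neg hα, if_pos haℓ]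
      have hS : (∑ i ∈ Finset.range (ℓ + 1 + 1), x ^ i)
          = x * (∑ i ∈ Finset.range (ℓ + 1), x ^ i) + 1 := geom_sum_succ
      rw [hS]
      ring
    · have hβ : ¬ Flt a w := Flt_asymm' hα
      have haℓ : ¬ Flt a lastW' := fun hc => hd (Flt_trans' hα hc)
      simp only [if_neg hd, if_pos hα, if_neg hβ, if_neg haℓ]
      rw [Finset.sum_range_succ (fun i => x ^ i) (ℓ + 1)]
      ring
    · have hβ : Flt a w := (Flt_or' haw).resolve_right hα
      simp only [if_neg hd, if_pos hβ, if_neg hα]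
      rw [Finset.sum_range_succ (fun i => x ^ i) (ℓ + 1)]
      ring

/- ### Window lemmas -/

lemma length_window {r n : ℕ} (π : GP r n) : (window π).length = n := by
  simp [window]

lemma window_getElem {r n : ℕ} (π : GP r n) (i : ℕ) (h : i < n) :
    (window π)[i]'(by rw [length_window]; exact h)
      = ((π.1 ⟨i, h⟩ : ℕ) + 1, (π.2 ⟨i, h⟩ : ℕ)) := by
  simp [window]

lemma window_injective {r n : ℕ} : Function.Injective (window (r := r) (n := n)) := by
  intro π π' hw
  have key : ∀ i : Fin n, π.1 i = π'.1 i ∧ π.2 i = π'.2 i := by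
    intro i
    have hgl := List.getElem_of_eq hw
      (show (i : ℕ) < (window π).length by rw [length_window]; exact i.isLt)
    rw [window_getElem π i i.isLt, window_getElem π' i i.isLt] at hgl
    simp only [Prod.mk.injEq, Fin.eta] at hgl
    obtain ⟨e1, e2⟩ := hgl
    exact ⟨Fin.ext (by omega), Fin.ext e2⟩
  ext i
  · exact congrArg Fin.val (key i).1
  · exact congrArg Fin.val (key i).2

lemma window_fst_nodup {r n : ℕ} (π : GP r n) : ((window π).map Prod.fst).Nodup := by
  have : (window π).map Prod.fst = (List.finRange n).map fun i => ((π.1 i : ℕ) + 1) := by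
    simp [window, Function.comp]
  rw [this]
  apply List.Nodup.map _ (List.nodup_finRange n)
  intro i j hij
  have hij' : (π.1 i : ℕ) + 1 = (π.1 j : ℕ) + 1 := hij
  exact π.1.injective (Fin.ext (by omega))

lemma window_mem_bounds {r n : ℕ} (π : GP r n) :
    ∀ p ∈ window π, (1 ≤ p.1 ∧ p.1 ≤ n) ∧ p.2 < r := by
  intro p hp
  simp only [window, List.mem_map] at hp
  obtain ⟨i, _, rfl⟩ := hp
  refine ⟨⟨by omega, ?_⟩, (π.2 i).isLt⟩
  have := (π.1 i).isLt
  omega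

lemma window_toFinset {r n : ℕ} (π : GP r n) :
    ((window π).map Prod.fst).toFinset = Finset.Icc 1 n := by
  apply Finset.eq_of_subset_of_card_le
  · intro x hx
    rw [List.mem_toFinset, List.mem_map] at hx
    obtain ⟨p, hp, rfl⟩ := hx
    have := window_mem_bounds π p hp
    exact Finset.mem_Icc.mpr this.1
  · rw [Nat.card_Icc, List.toFinset_card_of_nodup (window_fst_nodup π),
      List.length_map, length_window]
    omega

/-- Build a colored permutation from a suitable colored word. -/
noncomputable def mkGP (r n : ℕ) (U : List (ℕ × ℕ)) (h1 : U.length = n)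
    (hnd : (U.map Prod.fst).Nodup) (hb : ∀ p ∈ U, 1 ≤ p.1 ∧ p.1 ≤ n)
    (hc : ∀ p ∈ U, p.2 < r) : GP r n :=
  (Equiv.ofBijective
      (fun i : Fin n => (⟨(U[(i : ℕ)]'(by omega)).1 - 1, by
        have hmem := hb (U[(i : ℕ)]'(by omega)) (List.getElem_mem _)
        omega⟩ : Fin n))
      (by
        rw [← Finite.injective_iff_bijective]
        intro i j hij
        have hb1 := hb (U[(i : ℕ)]'(by omega)) (List.getElem_mem _)
        have hb2 := hb (U[(j : ℕ)]'(by omega)) (List.getElem_mem _)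
        have e : (U[(i : ℕ)]'(by omega)).1 - 1 = (U[(j : ℕ)]'(by omega)).1 - 1 :=
          congrArg Fin.val hij
        have e2 : (U[(i : ℕ)]'(by omega)).1 = (U[(j : ℕ)]'(by omega)).1 := by omega
        have e3 : (U.map Prod.fst)[(i : ℕ)]'(by simp; omega)
            = (U.map Prod.fst)[(j : ℕ)]'(by simp; omega) := by
          simpa using e2
        have := (List.Nodup.getElem_inj_iff hnd).mp e3
        exact Fin.ext this),
   fun i => ⟨(U[(i : ℕ)]'(by omega)).2, hc _ (List.getElem_mem _)⟩)

lemma window_mkGP (r n : ℕ) (U : List (ℕ × ℕ)) (h1 : U.length = n)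
    (hnd : (U.map Prod.fst).Nodup) (hb : ∀ p ∈ U, 1 ≤ p.1 ∧ p.1 ≤ n)
    (hc : ∀ p ∈ U, p.2 < r) : window (mkGP r n U h1 hnd hb hc) = U := by
  apply List.ext_getElem
  · rw [length_window, h1]
  · intro i hi hi'
    rw [length_window] at hi
    rw [window_getElem _ i hi]
    have hmem := hb (U[i]'(by omega)) (List.getElem_mem _)
    have h3 : ((mkGP r n U h1 hnd hb hc).1 ⟨i, hi⟩ : ℕ) = (U[i]'(by omega)).1 - 1 := rfl
    rw [h3]
    have h2 : ((mkGP r n U h1 hnd hb hc).2 ⟨i, hi⟩ : ℕ) = (U[i]'(by omega)).2 := rfl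
    rw [h2]
    ext
    · simp; omega
    · rfl

/-- Splitting of the geometric sum. -/
lemma geom_split (A : ℂ) (n r : ℕ) (hr : 1 ≤ r) :
    (∑ c ∈ Finset.range r, A ^ c) * (∑ t ∈ Finset.range n, (A ^ r) ^ t)
      = ∑ k ∈ Finset.range (n * r), A ^ k := by
  rw [Finset.sum_mul_sum, ← Finset.sum_product']
  symm
  apply Finset.sum_nbij' (i := fun k => ((k % r : ℕ), (k / r : ℕ)))
    (j := fun p : ℕ × ℕ => p.1 + r * p.2)
  · intro k hk
    rw [Finset.mem_range] at hk
    refine Finset.mem_product.mpr ⟨Finset.mem_range.mpr (Nat.mod_lt _ (by omega)), ?_⟩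
    rw [Finset.mem_range]
    exact Nat.div_lt_of_lt_mul (Nat.mul_comm n r ▸ hk)
  · intro p hp
    obtain ⟨h1, h2⟩ := Finset.mem_product.mp hp
    rw [Finset.mem_range] at h1 h2 ⊢
    calc p.1 + r * p.2 < r + r * p.2 := by omega
      _ = r * (p.2 + 1) := by ring
      _ ≤ r * n := Nat.mul_le_mul_left r (by omega)
      _ = n * r := Nat.mul_comm r n
  · intro k hk
    exact Nat.mod_add_div k r
  · intro p hp
    obtain ⟨h1, h2⟩ := Finset.mem_product.mp hp
    rw [Finset.mem_range] at h1 h2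
    have e1 : (p.1 + r * p.2) % r = p.1 := by
      rw [Nat.add_mul_mod_self_left, Nat.mod_eq_of_lt h1]
    have e2 : (p.1 + r * p.2) / r = p.2 := by
      rw [Nat.add_mul_div_left _ _ (by omega : 0 < r), Nat.div_eq_of_lt h1]
      omega
    exact Prod.ext e1 e2
  · intro k hk
    rw [← pow_mul, ← pow_add, Nat.mod_add_div]

/-- insertion lemma for `χ_{1,h}`: inserting the missing letter `m`. -/
theorem insertion_chi_one (r n m h : ℕ) (ζ q : ℂ)
    (hr : 1 ≤ r) (hn : 1 ≤ n) (hζ : IsPrimitiveRoot ζ r)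
    (hm1 : 1 ≤ m) (hm2 : m ≤ n) (hh : h < r)
    (W : List (ℕ × ℕ)) (hW : IsColoredWordOn r ((Finset.Icc 1 n).erase m) W) :
    ∑ π ∈ Finset.univ.filter (fun π : GP r n => W.Sublist (window π)),
      chi 1 ζ h (window π) * q ^ fmaj r (window π)
    = chi 1 ζ h W * q ^ fmaj r W * qnum (n * r) (ζ ^ h * q) := by
  obtain ⟨hnd, htf, hcolW⟩ := hW
  have hmIcc : m ∈ Finset.Icc 1 n := Finset.mem_Icc.mpr ⟨hm1, hm2⟩
  have hmW : m ∉ W.map Prod.fst := by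
    intro hc
    have h1 : m ∈ (Finset.Icc 1 n).erase m := htf ▸ List.mem_toFinset.mpr hc
    exact (Finset.notMem_erase m _) h1
  have hWlen : W.length + 1 = n := by
    have h1 : (W.map Prod.fst).toFinset.card = W.length := by
      rw [List.toFinset_card_of_nodup hnd, List.length_map]
    rw [htf, Finset.card_erase_of_mem hmIcc, Nat.card_Icc] at h1
    omega
  have hWb : ∀ p ∈ W, 1 ≤ p.1 ∧ p.1 ≤ n := by
    intro p hp
    have h1 : p.1 ∈ (W.map Prod.fst).toFinset :=
      List.mem_toFinset.mpr (List.mem_map_of_mem hp)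
    rw [htf] at h1
    exact Finset.mem_Icc.mp (Finset.mem_of_mem_erase h1)
  -- facts about the inserted words
  have hg1 : ∀ p : ℕ × ℕ, p ∈ Finset.range n ×ˢ Finset.range r →
      (W.insertIdx p.1 (m, p.2)).length = n := by
    intro p hp
    obtain ⟨h1, _⟩ := Finset.mem_product.mp hp
    rw [Finset.mem_range] at h1
    rw [List.length_insertIdx_of_le_length (by omega : p.1 ≤ W.length)]
    omega
  have hg2 : ∀ p : ℕ × ℕ, p ∈ Finset.range n ×ˢ Finset.range r →
      ((W.insertIdx p.1 (m, p.2)).map Prod.fst).Nodup := by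
    intro p hp
    obtain ⟨h1, _⟩ := Finset.mem_product.mp hp
    rw [Finset.mem_range] at h1
    rw [map_insertIdx']
    have hperm := List.perm_insertIdx m (W.map Prod.fst)
      (by rw [List.length_map]; omega : p.1 ≤ (W.map Prod.fst).length)
    exact hperm.nodup_iff.mpr (List.nodup_cons.mpr ⟨hmW, hnd⟩)
  have hmemins : ∀ p : ℕ × ℕ, p ∈ Finset.range n ×ˢ Finset.range r →
      ∀ u, u ∈ W.insertIdx p.1 (m, p.2) ↔ (u = (m, p.2) ∨ u ∈ W) := by
    intro p hp u
    obtain ⟨h1, _⟩ := Finset.mem_product.mp hp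
    rw [Finset.mem_range] at h1
    have hperm := List.perm_insertIdx (m, p.2) W (by omega : p.1 ≤ W.length)
    rw [hperm.mem_iff, List.mem_cons]
  have hg3 : ∀ p : ℕ × ℕ, p ∈ Finset.range n ×ˢ Finset.range r →
      ∀ u ∈ W.insertIdx p.1 (m, p.2), 1 ≤ u.1 ∧ u.1 ≤ n := by
    intro p hp u hu
    rcases (hmemins p hp u).mp hu with rfl | hu'
    · exact ⟨hm1, hm2⟩
    · exact hWb u hu'
  have hg4 : ∀ p : ℕ × ℕ, p ∈ Finset.range n ×ˢ Finset.range r →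
      ∀ u ∈ W.insertIdx p.1 (m, p.2), u.2 < r := by
    intro p hp u hu
    obtain ⟨_, h2⟩ := Finset.mem_product.mp hp
    rw [Finset.mem_range] at h2
    rcases (hmemins p hp u).mp hu with rfl | hu'
    · exact h2
    · exact hcolW u hu'
  -- the bijection
  have key : (∑ π ∈ Finset.univ.filter (fun π : GP r n => W.Sublist (window π)),
        chi 1 ζ h (window π) * q ^ fmaj r (window π))
      = ∑ p ∈ Finset.range n ×ˢ Finset.range r,
          chi 1 ζ h (W.insertIdx p.1 (m, p.2)) * q ^ fmaj r (W.insertIdx p.1 (m, p.2)) := by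
    refine (Finset.sum_bij
      (fun p hp => mkGP r n (W.insertIdx p.1 (m, p.2)) (hg1 p hp) (hg2 p hp)
        (hg3 p hp) (hg4 p hp)) ?_ ?_ ?_ ?_).symm
    · intro p hp
      rw [Finset.mem_filter]
      refine ⟨Finset.mem_univ _, ?_⟩
      rw [window_mkGP]
      exact sublist_insertIdx' W p.1 (m, p.2)
    · intro p1 hp1 p2 hp2 heq
      have hwin := congrArg window heq
      rw [window_mkGP, window_mkGP] at hwin
      obtain ⟨hp11, _⟩ := Finset.mem_product.mp hp1
      obtain ⟨hp21, _⟩ := Finset.mem_product.mp hp2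
      rw [Finset.mem_range] at hp11 hp21
      have hfst := congrArg (List.map Prod.fst) hwin
      rw [map_insertIdx', map_insertIdx'] at hfst
      have hj : p1.1 = p2.1 := by
        refine List.injOn_insertIdx_index_of_notMem (W.map Prod.fst) m hmW ?_ ?_ hfst
        · show p1.1 ≤ (W.map Prod.fst).length
          rw [List.length_map]; omega
        · show p2.1 ≤ (W.map Prod.fst).length
          rw [List.length_map]; omega
      rw [← hj] at hwin
      have hlt : p1.1 < (W.insertIdx p1.1 (m, p1.2)).length := by
        rw [List.length_insertIdx_of_le_length (by omega : p1.1 ≤ W.length)]; omega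
      have hg := List.getElem_of_eq hwin hlt
      rw [List.getElem_insertIdx_self (l := W) (x := (m, p1.2)) (i := p1.1) hlt,
        List.getElem_insertIdx_self (l := W) (x := (m, p2.2)) (i := p1.1)
          (by rw [List.length_insertIdx_of_le_length (by omega : p1.1 ≤ W.length)]; omega)] at hg
      have hc2 := congrArg Prod.snd hg
      simp only at hc2
      exact Prod.ext_iff.mpr ⟨hj, hc2⟩
    · intro π hπ
      rw [Finset.mem_filter] at hπ
      obtain ⟨-, hsub⟩ := hπ
      obtain ⟨j, hj, a, hwin⟩ := exists_insertIdx_of_sublist' hsub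
        (by rw [length_window]; omega)
      have hperm := List.perm_insertIdx a W (hj)
      have ham : a.1 = m := by
        have hfst : (window π).map Prod.fst = (W.map Prod.fst).insertIdx j a.1 := by
          rw [hwin, map_insertIdx']
      -- toFinset computation
        have hperm2 := List.perm_insertIdx a.1 (W.map Prod.fst)
          (by rw [List.length_map]; omega : j ≤ (W.map Prod.fst).length)
        have htfU : ((window π).map Prod.fst).toFinset
            = insert a.1 (W.map Prod.fst).toFinset := by
          rw [hfst, List.toFinset_eq_of_perm _ _ hperm2, List.toFinset_cons]
        have h5 : m ∈ insert a.1 (W.map Prod.fst).toFinset := by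
          rw [← htfU, window_toFinset]; exact hmIcc
        rcases Finset.mem_insert.mp h5 with h6 | h6
        · exact h6.symm
        · exact absurd (List.mem_toFinset.mp h6) hmW
      have haw : a ∈ window π := by
        rw [hwin]
        exact hperm.mem_iff.mpr (List.mem_cons_self (a := a) (l := W))
      have har : a.2 < r := ((window_mem_bounds π) a haw).2
      have hjn : j < n := by omega
      refine ⟨(j, a.2), Finset.mem_product.mpr
        ⟨Finset.mem_range.mpr hjn, Finset.mem_range.mpr har⟩, ?_⟩
      apply window_injective
      rw [window_mkGP, hwin]
      congr 1
      exact Prod.ext_iff.mpr ⟨ham.symm, rfl⟩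
    · intro p hp
      rw [window_mkGP]
  rw [key]
  -- computation of the sum
  have hcolins : ∀ j ≤ W.length, ∀ c : ℕ, colSum (W.insertIdx j (m, c)) = colSum W + c := by
    intro j hj c
    unfold colSum
    rw [map_insertIdx']
    have hperm := List.perm_insertIdx c (W.map Prod.snd)
      (by rw [List.length_map]; omega : j ≤ (W.map Prod.snd).length)
    rw [hperm.sum_eq, List.sum_cons]
    omega
  rw [Finset.sum_product]
  have hsummand : ∀ j ∈ Finset.range n, ∀ c ∈ Finset.range r,
      chi 1 ζ h (W.insertIdx j (m, c)) * q ^ fmaj r (W.insertIdx j (m, c))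
        = (ζ ^ (h * colSum W) * q ^ colSum W) *
            ((ζ ^ h * q) ^ c * (q ^ r) ^ majF (W.insertIdx j (m, c))) := by
    intro j hj c hc
    rw [Finset.mem_range] at hj
    unfold chi fmaj
    rw [one_pow, one_mul, hcolins j (by omega) c]
    rw [show h * (colSum W + c) = h * colSum W + h * c by ring]
    rw [show r * majF (W.insertIdx j (m, c)) + (colSum W + c)
      = r * majF (W.insertIdx j (m, c)) + colSum W + c by ring]
    rw [pow_add, pow_add, pow_add, pow_mul q r, pow_mul ζ h]
    ring
  rw [Finset.sum_congr rfl (fun j hj => Finset.sum_congr rfl (hsummand j hj))]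
  rw [Finset.sum_comm]
  have hζr : (ζ ^ h * q) ^ r = q ^ r := by
    rw [mul_pow, ← pow_mul, show h * r = r * h by ring, pow_mul, hζ.pow_eq_one, one_pow, one_mul]
  have hinner2 : ∀ c ∈ Finset.range r,
      (∑ j ∈ Finset.range n, (ζ ^ (h * colSum W) * q ^ colSum W) *
        ((ζ ^ h * q) ^ c * (q ^ r) ^ majF (W.insertIdx j (m, c))))
      = (ζ ^ (h * colSum W) * q ^ colSum W) * (ζ ^ h * q) ^ c *
          ((∑ i ∈ Finset.range n, (q ^ r) ^ i) * (q ^ r) ^ majF W) := by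
    intro c hc
    rw [← Finset.mul_sum, ← Finset.mul_sum]
    rw [show (∑ j ∈ Finset.range n, (q ^ r) ^ majF (W.insertIdx j (m, c)))
      = (∑ i ∈ Finset.range n, (q ^ r) ^ i) * (q ^ r) ^ majF W from by
        rw [← hWlen]
        exact lemA (q ^ r) (m, c) W hmW]
    ring
  rw [Finset.sum_congr rfl hinner2, ← Finset.sum_mul, ← Finset.mul_sum]
  unfold chi fmaj qnum
  rw [one_pow, one_mul, ← geom_split (ζ ^ h * q) n r hr, hζr, pow_add, pow_mul q r]
  ring
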